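/- arXiv:1903.12172 — 2 statements merged into one kernel-verified Lean document; each statement's English description precedes it below -/
import Mathlib

section
/- Let 0 < h₀ < 1 and 0 < h ≤ h₀. The image of the rectangle [1, 1+h²] + i[-h, h] in ℂ under the map z ↦ h⁻¹·z^{1/2} (principal square root) is contained in a rectangle of the form [h⁻¹, h⁻¹(1 + c₁h²)] + i[-c₂, c₂], where c₁, c₂ > 0 depend only on h₀ and not on h. -/
open Complex Set

/-- The image of the box `[1, 1+h²] + i[-h, h]` under `z ↦ h⁻¹ z^{1/2}` (principal square
root) is contained in a box `[h⁻¹, h⁻¹(1 + c₁ h²)] + i[-c₂, c₂]` with `c₁, c₂ > 0`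
depending only on `h₀`, for all `0 < h ≤ h₀`. -/
theorem stmt0 (h₀ : ℝ) (hh₀ : 0 < h₀) (hh₀1 : h₀ < 1) :
    ∃ c₁ c₂ : ℝ, 0 < c₁ ∧ 0 < c₂ ∧ ∀ h : ℝ, 0 < h → h ≤ h₀ →
      (fun z : ℂ => (h : ℂ)⁻¹ * z ^ ((1 : ℂ)/2)) ''
          {z : ℂ | 1 ≤ z.re ∧ z.re ≤ 1 + h ^ 2 ∧ -h ≤ z.im ∧ z.im ≤ h}
        ⊆ {w : ℂ | h⁻¹ ≤ w.re ∧ w.re ≤ h⁻¹ * (1 + c₁ * h ^ 2) ∧ -c₂ ≤ w.im ∧ w.im ≤ c₂} := by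
  refine ⟨1, 1, one_pos, one_pos, fun h hp hle => ?_⟩
  rintro w ⟨z, ⟨hx1, hx2, hy1, hy2⟩, rfl⟩
  have hinv : (h : ℂ)⁻¹ = ((h⁻¹ : ℝ) : ℂ) := by push_cast; ring
  have hhalf : (1 : ℂ)/2 = (2⁻¹ : ℂ) := by norm_num
  have hAx : z.re ≤ ‖z‖ := Complex.re_le_norm z
  have hA0' : (0:ℝ) ≤ ‖z‖ := norm_nonneg z
  have hAsq : ‖z‖ ^ 2 = z.re ^ 2 + z.im ^ 2 := by
    rw [Complex.sq_norm, Complex.normSq_apply]; ring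
  have hh1 : h ≤ 1 := hle.trans hh₀1.le
  have hy2' : z.im ^ 2 ≤ h ^ 2 := by nlinarith
  -- upper bound on abs z
  have hAle : ‖z‖ ≤ (1 + h ^ 2) ^ 2 := by
    nlinarith [sq_nonneg h, sq_nonneg (z.re), hx1, hx2]
  have hre : ((h : ℂ)⁻¹ * z ^ ((1 : ℂ)/2)).re = h⁻¹ * Real.sqrt ((‖z‖ + z.re) / 2) := by
    rw [hinv, Complex.re_ofReal_mul, hhalf, Complex.cpow_inv_two_re]
  have him : |((h : ℂ)⁻¹ * z ^ ((1 : ℂ)/2)).im| = h⁻¹ * Real.sqrt ((‖z‖ - z.re) / 2) := by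
    rw [hinv, Complex.im_ofReal_mul, abs_mul, _root_.abs_of_nonneg (by positivity : (0:ℝ) ≤ h⁻¹),
      hhalf, Complex.abs_cpow_inv_two_im]
  constructor
  · -- h⁻¹ ≤ re
    rw [hre]
    have : (1:ℝ) ≤ Real.sqrt ((‖z‖ + z.re) / 2) := by
      rw [show (1:ℝ) = Real.sqrt 1 by simp]
      apply Real.sqrt_le_sqrt
      nlinarith
    nlinarith [inv_pos.mpr hp]
  refine ⟨?_, ?_, ?_⟩
  · -- re ≤ h⁻¹ (1 + h²)
    rw [hre]
    have : Real.sqrt ((‖z‖ + z.re) / 2) ≤ 1 + h ^ 2 := by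
      rw [show (1:ℝ) + h ^ 2 = Real.sqrt ((1 + h ^ 2) ^ 2) by
        rw [Real.sqrt_sq (by positivity)]]
      apply Real.sqrt_le_sqrt
      nlinarith
    have hinvp : (0:ℝ) < h⁻¹ := inv_pos.mpr hp
    calc h⁻¹ * Real.sqrt ((‖z‖ + z.re) / 2) ≤ h⁻¹ * (1 + h ^ 2) := by
          exact mul_le_mul_of_nonneg_left this hinvp.le
      _ = h⁻¹ * (1 + 1 * h ^ 2) := by ring
  all_goals {
    have key : |((h : ℂ)⁻¹ * z ^ ((1 : ℂ)/2)).im| ≤ 1 := by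
      rw [him]
      have hAmx : ‖z‖ - z.re ≤ z.im ^ 2 / 2 := by nlinarith
      have : Real.sqrt ((‖z‖ - z.re) / 2) ≤ h / 2 := by
        rw [show h / 2 = Real.sqrt ((h/2) ^ 2) by rw [Real.sqrt_sq (by positivity)]]
        apply Real.sqrt_le_sqrt
        nlinarith
      calc h⁻¹ * Real.sqrt ((‖z‖ - z.re) / 2) ≤ h⁻¹ * (h / 2) := by
            exact mul_le_mul_of_nonneg_left this (by positivity)
        _ = 1 / 2 := by field_simp
        _ ≤ 1 := by norm_num
    cases abs_le.mp key with
    | intro hl hr => linarith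
  }
end

section
/- Let F be holomorphic on a neighborhood of the rectangle R = (w - 2a, w + 2a) + i(-δ_-, δ_+) with 0 < δ_+ < 1, and suppose |F(z)| ≤ M on R, |F(z)| ≤ 1/Im z for Im z > 0, z ∈ R. If additionally |F| ≤ M on all of R with M = exp(C h^{-L}) and a² ≥it C h^{-3L} δ², then |F(z)| ≤ δ⁻¹ e^{C+1} for z in the real interval [w - a, w + a]. (Semiclassical maximum principle, scalar version.) -/
set_option maxHeartbeats 1000000


open Complex Real Set

/-- Semiclassical maximum principle, scalar version: if `F` is holomorphic on a
neighborhood of the rectangle `(w-2a, w+2a) + i(-δ h^{-L}, δ)`, bounded by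
`exp(C h^{-L})` there, bounded by `1/Im z` in the upper part, and
`a² ≥ C h^{-3L} δ²`, then `|F| ≤ δ⁻¹ e^{C+1}` on the real interval `[w-a, w+a]`. -/
theorem stmt10 (F : ℂ → ℂ) (w a δ h L C : ℝ)
    (hh : 0 < h) (hδ0 : 0 < δ) (hδ1 : δ < 1) (hL : 0 < L) (hC : 0 < C) (ha : 0 < a)
    (haδ : a ^ 2 ≥ C * h ^ (-3 * L) * δ ^ 2)
    (U : Set ℂ) (hU : IsOpen U)
    (hRU : {z : ℂ | w - 2 * a < z.re ∧ z.re < w + 2 * a ∧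
              -(δ * h ^ (-L)) < z.im ∧ z.im < δ} ⊆ U)
    (hF : DifferentiableOn ℂ F U)
    (hM : ∀ z : ℂ, z ∈ {z : ℂ | w - 2 * a < z.re ∧ z.re < w + 2 * a ∧
              -(δ * h ^ (-L)) < z.im ∧ z.im < δ} → ‖F z‖ ≤ Real.exp (C * h ^ (-L)))
    (hIm : ∀ z : ℂ, z ∈ {z : ℂ | w - 2 * a < z.re ∧ z.re < w + 2 * a ∧
              -(δ * h ^ (-L)) < z.im ∧ z.im < δ} → 0 < z.im →
              ‖F z‖ ≤ 1 / z.im) :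
    ∀ x : ℝ, x ∈ Icc (w - a) (w + a) → ‖F x‖ ≤ δ⁻¹ * Real.exp (C + 1) := by
  intro x hx
  rw [mem_Icc] at hx
  obtain ⟨hx1, hx2⟩ := hx
  have hrp : (0:ℝ) < h ^ (-L) := Real.rpow_pos_of_pos hh _
  have hδinv : (1:ℝ) ≤ δ⁻¹ := (one_le_inv₀ hδ0).2 hδ1.le
  -- membership of the real point in the rectangle
  have hxR : (x:ℂ) ∈ {z : ℂ | w - 2 * a < z.re ∧ z.re < w + 2 * a ∧
      -(δ * h ^ (-L)) < z.im ∧ z.im < δ} := by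
    refine ⟨?_, ?_, ?_, ?_⟩ <;> simp [Complex.ofReal_re, Complex.ofReal_im] <;>
      first
        | linarith
        | positivity
  rcases le_or_gt 1 h with hh1 | hh1
  · -- trivial case h ≥ 1
    have h1 : h ^ (-L) ≤ 1 := Real.rpow_le_one_of_one_le_of_nonpos hh1 (by linarith)
    calc ‖F x‖ ≤ Real.exp (C * h ^ (-L)) := hM _ hxR
      _ ≤ Real.exp (C + 1) := Real.exp_le_exp.2 (by nlinarith)
      _ ≤ δ⁻¹ * Real.exp (C + 1) :=
          le_mul_of_one_le_left (Real.exp_nonneg _) hδinv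
  · -- main case h < 1
    have h1le : (1:ℝ) ≤ h ^ (-L) :=
      Real.one_le_rpow_of_pos_of_le_one_of_nonpos hh hh1.le (by linarith)
    set dm : ℝ := δ * h ^ (-L) with hdm
    have hdm0 : 0 < dm := by positivity
    have hdmδ : δ ≤ dm := by
      rw [hdm]; nlinarith
    set μ : ℝ := C * h ^ (-L) / a ^ 2 with hμdef
    set lam : ℝ := C / δ with hlamdef
    have hμ0 : 0 < μ := by positivity
    have hlam0 : 0 < lam := by positivity
    have hμa : μ * a ^ 2 = C * h ^ (-L) := by
      rw [hμdef]; field_simp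
    have hlamδ : lam * δ = C := by
      rw [hlamdef]; field_simp
    have hlamdm : lam * dm = C * h ^ (-L) := by
      rw [hlamdef, hdm]; field_simp
    have key1 : μ * dm ^ 2 ≤ 1 := by
      have h3 : h ^ (-L) * (h ^ (-L)) ^ 2 = h ^ (-3 * L) := by
        rw [sq, ← Real.rpow_add hh, ← Real.rpow_add hh]; ring_nf
      have heq : μ * dm ^ 2 = C * h ^ (-3 * L) * δ ^ 2 / a ^ 2 := by
        rw [hμdef, hdm, mul_pow, ← h3]; ring
      rw [heq, div_le_one (by positivity)]
      linarith
    have key2 : μ * δ ^ 2 ≤ 1 := by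
      have hsq : δ ^ 2 ≤ dm ^ 2 := pow_le_pow_left₀ hδ0.le hdmδ 2
      nlinarith
    set K : ℝ := lam + 2 * μ * a with hKdef
    have hK0 : 0 < K := by positivity
    -- the auxiliary function
    set G : ℂ → ℂ := fun z =>
      F z * Complex.exp (-(Complex.I * (lam : ℂ)) * (z - (x : ℂ)) -
        (μ : ℂ) * (z - (x : ℂ)) ^ 2) with hGdef
    have hre : ∀ z : ℂ, ‖G z‖ =
        ‖F z‖ * Real.exp (lam * z.im - μ * ((z.re - x) ^ 2 - z.im ^ 2)) := by
      intro z
      rw [hGdef]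
      simp only [norm_mul, Complex.norm_exp]
      congr 2
      simp [Complex.sub_re, Complex.sub_im, Complex.mul_re, Complex.mul_im,
        Complex.I_re, Complex.I_im, Complex.ofReal_re, Complex.ofReal_im, pow_two]
    have hGU : DifferentiableOn ℂ G U := by
      apply hF.mul
      apply Differentiable.differentiableOn
      apply Complex.differentiable_exp.comp
      apply Differentiable.sub
      · exact (differentiable_const _).mul (differentiable_id.sub (differentiable_const _))
      · exact (differentiable_const _).mul
          ((differentiable_id.sub (differentiable_const _)).pow 2)
    -- main estimate for each small ε
    have main : ∀ ε : ℝ, 0 < ε → ε < a → ε < δ →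
        ‖F x‖ ≤ (δ - ε)⁻¹ * Real.exp (C + 1 + K * ε) := by
      intro ε hε hεa hεδ
      set V : Set ℂ := Ioo (w - 2 * a + ε) (w + 2 * a - ε) ×ℂ Ioo (-dm + ε) (δ - ε) with hV
      have hlt1 : w - 2 * a + ε < w + 2 * a - ε := by linarith
      have hlt2 : -dm + ε < δ - ε := by linarith
      have hVo : IsOpen V := IsOpen.reProdIm isOpen_Ioo isOpen_Ioo
      have hclV : closure V =
          Icc (w - 2 * a + ε) (w + 2 * a - ε) ×ℂ Icc (-dm + ε) (δ - ε) := by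
        rw [hV, Complex.closure_reProdIm, closure_Ioo hlt1.ne, closure_Ioo hlt2.ne]
      have hclR : closure V ⊆ {z : ℂ | w - 2 * a < z.re ∧ z.re < w + 2 * a ∧
          -(δ * h ^ (-L)) < z.im ∧ z.im < δ} := by
        rw [hclV]
        rintro z hz
        rw [Complex.mem_reProdIm] at hz
        obtain ⟨⟨h1, h2⟩, h3, h4⟩ := hz
        refine ⟨by linarith, by linarith, ?_, by linarith⟩
        rw [← hdm]; linarith
      have hbd : Bornology.IsBounded V :=
        (Metric.isBounded_Ioo _ _).reProdIm (Metric.isBounded_Ioo _ _)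
      have hGd : DiffContOnCl ℂ G V := by
        apply DifferentiableOn.diffContOnCl
        exact hGU.mono (hclR.trans hRU)
      have hxcl : (x : ℂ) ∈ closure V := by
        rw [hclV, Complex.mem_reProdIm]
        constructor
        · simp only [Complex.ofReal_re, mem_Icc]; constructor <;> linarith
        · simp only [Complex.ofReal_im, mem_Icc]; constructor <;> linarith
      have hfront : ∀ z ∈ frontier V, ‖G z‖ ≤ (δ - ε)⁻¹ * Real.exp (C + 1 + K * ε) := by
        intro z hz
        have hzc : z ∈ closure V := frontier_subset_closure hz
        have hzR : z ∈ {z : ℂ | w - 2 * a < z.re ∧ z.re < w + 2 * a ∧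
            -(δ * h ^ (-L)) < z.im ∧ z.im < δ} := hclR hzc
        have hznV : z ∉ V := by
          rw [hVo.frontier_eq] at hz
          exact hz.2
        rw [hclV, Complex.mem_reProdIm, mem_Icc, mem_Icc] at hzc
        obtain ⟨⟨hre1, hre2⟩, him1, him2⟩ := hzc
        have hineps : (δ - ε)⁻¹ ≥ 1 := by
          rw [ge_iff_le, le_inv_comm₀ one_pos (by linarith)]
          simp; linarith
        -- common bounds
        have hlamim : lam * z.im ≤ C := by
          have : lam * z.im ≤ lam * δ :=
            mul_le_mul_of_nonneg_left (by linarith) hlam0.le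
          linarith [hlamδ]
        have himsq : z.im ^ 2 ≤ dm ^ 2 := by
          apply sq_le_sq' <;> linarith
        have hμim : μ * z.im ^ 2 ≤ 1 :=
          le_trans (mul_le_mul_of_nonneg_left himsq hμ0.le) key1
        rw [hre]
        by_cases htop : z.im = δ - ε
        · -- top edge
          have h0 : 0 < z.im := by rw [htop]; linarith
          have hFz : ‖F z‖ ≤ 1 / z.im := hIm z hzR h0
          have hexp : lam * z.im - μ * ((z.re - x) ^ 2 - z.im ^ 2) ≤ C + 1 := by
            have h5 : μ * (z.re - x) ^ 2 ≥ 0 := by positivity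
            have h6 : z.im ^ 2 ≤ δ ^ 2 := by
              apply sq_le_sq' <;> linarith
            have h8 := le_trans (mul_le_mul_of_nonneg_left h6 hμ0.le) key2
            linarith
          calc ‖F z‖ * Real.exp (lam * z.im - μ * ((z.re - x) ^ 2 - z.im ^ 2))
              ≤ (1 / z.im) * Real.exp (C + 1) := by
                apply mul_le_mul hFz (Real.exp_le_exp.2 hexp) (Real.exp_nonneg _)
                positivity
            _ = (δ - ε)⁻¹ * Real.exp (C + 1) := by rw [htop, one_div]
            _ ≤ (δ - ε)⁻¹ * Real.exp (C + 1 + K * ε) := by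
                apply mul_le_mul_of_nonneg_left (Real.exp_le_exp.2 (by nlinarith))
                positivity
        · by_cases hbot : z.im = -dm + ε
          · -- bottom edge
            have hFz : ‖F z‖ ≤ Real.exp (C * h ^ (-L)) := hM z hzR
            have hexp : C * h ^ (-L) +
                (lam * z.im - μ * ((z.re - x) ^ 2 - z.im ^ 2)) ≤ C + 1 + K * ε := by
              have h5 : μ * (z.re - x) ^ 2 ≥ 0 := by positivity
              have h6 : lam * z.im = -(C * h ^ (-L)) + lam * ε := by
                rw [hbot, mul_add, ← hlamdm]; ring
              have h7 : lam * ε ≤ K * ε :=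
                mul_le_mul_of_nonneg_right (by rw [hKdef]; nlinarith) hε.le
              linarith
            calc ‖F z‖ * Real.exp (lam * z.im - μ * ((z.re - x) ^ 2 - z.im ^ 2))
                ≤ Real.exp (C * h ^ (-L)) *
                    Real.exp (lam * z.im - μ * ((z.re - x) ^ 2 - z.im ^ 2)) := by
                  apply mul_le_mul_of_nonneg_right hFz (Real.exp_nonneg _)
              _ = Real.exp (C * h ^ (-L) +
                    (lam * z.im - μ * ((z.re - x) ^ 2 - z.im ^ 2))) := by
                  rw [← Real.exp_add]
              _ ≤ Real.exp (C + 1 + K * ε) := Real.exp_le_exp.2 hexp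
              _ ≤ (δ - ε)⁻¹ * Real.exp (C + 1 + K * ε) :=
                  le_mul_of_one_le_left (Real.exp_nonneg _) hineps
          · -- side edges
            have hzim : z.im ∈ Ioo (-dm + ε) (δ - ε) := by
              rw [mem_Ioo]
              constructor
              · rcases lt_or_eq_of_le him1 with h' | h'
                · exact h'
                · exact absurd h'.symm hbot
              · rcases lt_or_eq_of_le him2 with h' | h'
                · exact h'
                · exact absurd h' htop
            have hzre : z.re = w - 2 * a + ε ∨ z.re = w + 2 * a - ε := by
              by_contra hcon
              push_neg at hcon
              apply hznV
              rw [hV, Complex.mem_reProdIm]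
              exact ⟨⟨lt_of_le_of_ne hre1 (Ne.symm hcon.1), lt_of_le_of_ne hre2 hcon.2⟩, hzim⟩
            have hside : (a - ε) ^ 2 ≤ (z.re - x) ^ 2 := by
              rcases hzre with h' | h'
              · nlinarith [sq_nonneg (z.re - x + (a - ε))]
              · nlinarith [sq_nonneg (z.re - x - (a - ε))]
            have hFz : ‖F z‖ ≤ Real.exp (C * h ^ (-L)) := hM z hzR
            have hexp : C * h ^ (-L) +
                (lam * z.im - μ * ((z.re - x) ^ 2 - z.im ^ 2)) ≤ C + 1 + K * ε := by
              have h5 : μ * (a - ε) ^ 2 ≤ μ * (z.re - x) ^ 2 :=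
                mul_le_mul_of_nonneg_left hside hμ0.le
              have h6 : μ * a ^ 2 - 2 * μ * a * ε ≤ μ * (a - ε) ^ 2 := by
                nlinarith [mul_nonneg hμ0.le (sq_nonneg ε)]
              have h7 : 2 * μ * a * ε ≤ K * ε :=
                mul_le_mul_of_nonneg_right (by rw [hKdef]; linarith) hε.le
              rw [hμa] at h6
              linarith
            calc ‖F z‖ * Real.exp (lam * z.im - μ * ((z.re - x) ^ 2 - z.im ^ 2))
                ≤ Real.exp (C * h ^ (-L)) *
                    Real.exp (lam * z.im - μ * ((z.re - x) ^ 2 - z.im ^ 2)) := by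
                  apply mul_le_mul_of_nonneg_right hFz (Real.exp_nonneg _)
              _ = Real.exp (C * h ^ (-L) +
                    (lam * z.im - μ * ((z.re - x) ^ 2 - z.im ^ 2))) := by
                  rw [← Real.exp_add]
              _ ≤ Real.exp (C + 1 + K * ε) := Real.exp_le_exp.2 hexp
              _ ≤ (δ - ε)⁻¹ * Real.exp (C + 1 + K * ε) := by
                  apply le_mul_of_one_le_left (Real.exp_nonneg _)
                  rw [le_inv_comm₀ one_pos (by linarith)]
                  simp; linarith
      have hmax := Complex.norm_le_of_forall_mem_frontier_norm_le hbd hGd hfront hxcl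
      rw [hre] at hmax
      simpa using hmax
    -- pass to the limit ε → 0⁺
    have hmin : (0:ℝ) < min a δ := lt_min ha hδ0
    have hev : ∀ᶠ ε in nhdsWithin (0:ℝ) (Ioi 0),
        ‖F x‖ ≤ (δ - ε)⁻¹ * Real.exp (C + 1 + K * ε) := by
      filter_upwards [Ioo_mem_nhdsGT_of_mem (left_mem_Ico.2 hmin)] with ε hε
      exact main ε hε.1 (lt_of_lt_of_le hε.2 (min_le_left _ _))
        (lt_of_lt_of_le hε.2 (min_le_right _ _))
    have htend : Filter.Tendsto (fun ε : ℝ => (δ - ε)⁻¹ * Real.exp (C + 1 + K * ε))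
        (nhdsWithin (0:ℝ) (Ioi 0)) (nhds (δ⁻¹ * Real.exp (C + 1))) := by
      have hcont : ContinuousAt (fun ε : ℝ => (δ - ε)⁻¹ * Real.exp (C + 1 + K * ε)) 0 := by
        apply ContinuousAt.mul
        · exact ((continuous_const.sub continuous_id).continuousAt).inv₀ (by simpa using hδ0.ne')
        · exact (Real.continuous_exp.comp (by fun_prop)).continuousAt
      have := hcont.continuousWithinAt (s := Ioi (0:ℝ))
      simpa using this.tendsto
    exact ge_of_tendsto htend hev
end
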